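/- Let τ be a non-monotone permutation with x(τ) ≰ i(τ). Then the closed interval [x(τ), τ] in the consecutive pattern poset contains exactly two maximal chains, and these two chains have only the elements x(τ) and τ in common. -/

import Mathlib

/-- Standardization of a list of distinct naturals: replace each entry by its rank
(the number of entries less than or equal to it). -/
def stdize (s : List ℕ) : List ℕ := s.map (fun x => (s.filter (· ≤ x)).length)

/-- All contiguous subwords (infixes) of a list. -/
def infixes (l : List ℕ) : List (List ℕ) := l.inits.flatMap List.tails

/-- `l` is a permutation of `{1,…,d}` where `d = l.length ≥ 1`; these are the
elements of the consecutive pattern poset. -/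
def IsPermList (l : List ℕ) : Prop := l ≠ [] ∧ l.Perm (List.range' 1 l.length)

/-- Consecutive pattern containment: `σ ≤ τ` iff `σ` is the standardization of
some contiguous subsequence of `τ`. -/
def PattLE (σ τ : List ℕ) : Prop := σ ∈ (infixes τ).map stdize

instance (σ τ : List ℕ) : Decidable (PattLE σ τ) :=
  inferInstanceAs (Decidable (σ ∈ (infixes τ).map stdize))

/-- A permutation is monotone if its letters strictly increase or strictly decrease. -/
def MonotoneList (l : List ℕ) : Prop := l.Chain' (· < ·) ∨ l.Chain' (· > ·)

/-- The interior `i(τ)`: standardization of `τ` with first and last letters removed. -/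
def pattInterior (τ : List ℕ) : List ℕ := stdize τ.tail.dropLast

/-- Length of the longest proper prefix of `τ` whose standardization is also the
standardization of a suffix of `τ`. -/
def extLen (τ : List ℕ) : ℕ :=
  Nat.findGreatest (fun k => stdize (τ.take k) = stdize (τ.drop (τ.length - k))) (τ.length - 1)

/-- The exterior `x(τ)`: the longest permutation that is both a proper prefix and a
suffix of `τ`. -/
def pattExterior (τ : List ℕ) : List ℕ := stdize (τ.take (extLen τ))

/-- The closed interval `[σ,τ]` in the consecutive pattern poset, as a `Finset`. -/
def pattInterval (σ τ : List ℕ) : Finset (List ℕ) :=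
  ((infixes τ).map stdize).toFinset.filter (fun z => PattLE σ z)

/-- The open interval `(σ,τ)` in the consecutive pattern poset, as a `Finset`. -/
def openPattInterval (σ τ : List ℕ) : Finset (List ℕ) :=
  ((infixes τ).map stdize).toFinset.filter (fun z => PattLE σ z ∧ z ≠ σ ∧ z ≠ τ)

/-- `τ` covers `σ` in the consecutive pattern poset: `σ < τ` and no element lies
strictly between them. -/
def CoveredBy (σ τ : List ℕ) : Prop :=
  PattLE σ τ ∧ σ ≠ τ ∧ ¬ ∃ ρ, IsPermList ρ ∧ PattLE σ ρ ∧ PattLE ρ τ ∧ ρ ≠ σ ∧ ρ ≠ τ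

/-- `c` is a maximal chain of the interval `[σ,τ]`: it starts at `τ`, ends at `σ`,
and each element covers the next. -/
def IsMaxChainPatt (σ τ : List ℕ) (c : List (List ℕ)) : Prop :=
  c.head? = some τ ∧ c.getLast? = some σ ∧ c.Chain' (fun a b => CoveredBy b a)

open List

/-- rank function -/
def rk (s : List ℕ) (x : ℕ) : ℕ := (s.filter (· ≤ x)).length

lemma stdize_eq_map (s : List ℕ) : stdize s = s.map (rk s) := rfl

@[simp] lemma length_stdize (s : List ℕ) : (stdize s).length = s.length := by
  simp [stdize]

@[simp] lemma stdize_nil : stdize [] = [] := rfl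

lemma mem_infixes (t l : List ℕ) : t ∈ infixes l ↔ t <:+: l := by
  simp only [infixes, mem_flatMap, mem_inits, mem_tails]
  constructor
  · rintro ⟨p, hp, ht⟩
    exact ht.isInfix.trans hp.isInfix
  · rintro ⟨u, v, rfl⟩
    exact ⟨u ++ t, ⟨v, rfl⟩, ⟨u, rfl⟩⟩

lemma pattLE_iff {σ τ : List ℕ} : PattLE σ τ ↔ ∃ w, w <:+: τ ∧ stdize w = σ := by
  simp only [PattLE, mem_map, mem_infixes]

lemma rk_lt_rk {s : List ℕ} {a b : ℕ} (hb : b ∈ s) (hab : a < b) :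
    rk s a < rk s b := by
  have h1 : s.filter (· ≤ a) = (s.filter (· ≤ b)).filter (· ≤ a) := by
    rw [filter_filter]
    refine (filter_congr ?_).symm
    intro x hx
    by_cases hxa : x ≤ a
    · simp [hxa, le_trans hxa (le_of_lt hab)]
    · simp [hxa]
  rw [rk, rk, h1]
  rcases lt_or_eq_of_le (length_filter_le (· ≤ a) (s.filter (· ≤ b))) with h | h
  · exact h
  · exfalso
    have heq := (filter_sublist (l := s.filter (· ≤ b)) (p := (· ≤ a))).eq_of_length h
    have hble : b ∈ (s.filter (· ≤ b)).filter (· ≤ a) := by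
      rw [heq]; exact mem_filter.2 ⟨hb, by simp⟩
    have := (mem_filter.1 hble).2
    simp only [decide_eq_true_eq] at this
    omega

lemma rk_lt_rk_iff {s : List ℕ} {a b : ℕ} (ha : a ∈ s) (hb : b ∈ s) :
    rk s a < rk s b ↔ a < b := by
  constructor
  · intro h
    by_contra hab
    push_neg at hab
    rcases lt_or_eq_of_le hab with h' | h'
    · exact absurd (rk_lt_rk ha h') (by omega)
    · subst h'; exact lt_irrefl _ h
  · exact rk_lt_rk hb

lemma rk_le_rk_iff {s : List ℕ} {a b : ℕ} (ha : a ∈ s) (hb : b ∈ s) :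
    rk s a ≤ rk s b ↔ a ≤ b := by
  rw [← not_lt, ← not_lt, not_iff_not]
  exact rk_lt_rk_iff hb ha

lemma stdize_map {w : List ℕ} {g : ℕ → ℕ}
    (hg : ∀ a ∈ w, ∀ b ∈ w, (a ≤ b ↔ g a ≤ g b)) :
    stdize (w.map g) = stdize w := by
  rw [stdize_eq_map, stdize_eq_map, map_map]
  refine map_congr_left ?_
  intro x hx
  show rk (w.map g) (g x) = rk w x
  rw [rk, rk, filter_map]
  rw [show (w.filter ((fun y => decide (y ≤ g x)) ∘ g)) = w.filter (· ≤ x) from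
    filter_congr (fun a ha => by
      simp only [Function.comp]
      exact decide_eq_decide.2 (hg a ha x hx).symm)]
  simp

lemma rk_iff_of_mem {s : List ℕ} (hs : s.Nodup) {a b : ℕ} (ha : a ∈ s) (hb : b ∈ s) :
    a ≤ b ↔ rk s a ≤ rk s b := (rk_le_rk_iff ha hb).symm

/-- C1: window transfer (forward) -/
lemma pattLE_stdize_of_infix {w s : List ℕ} (hs : s.Nodup) (h : w <:+: s) :
    PattLE (stdize w) (stdize s) := by
  rw [pattLE_iff]
  refine ⟨w.map (rk s), ?_, ?_⟩
  · rw [stdize_eq_map]; exact h.map (rk s)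
  · exact stdize_map (fun a ha b hb =>
      rk_iff_of_mem hs (h.sublist.mem ha) (h.sublist.mem hb))

/-- C2: every infix of `stdize s` comes from an infix of `s`. -/
lemma exists_infix_of_infix_stdize {z s : List ℕ} (hs : s.Nodup) (h : z <:+: stdize s) :
    ∃ w, w <:+: s ∧ stdize w = stdize z ∧ w.length = z.length := by
  obtain ⟨u, v, huv⟩ := h
  rw [stdize_eq_map] at huv
  set w : List ℕ := (s.drop u.length).take z.length with hw
  have hwinf : w <:+: s := ((take_prefix _ _).isInfix).trans (drop_suffix _ _).isInfix
  have hz : z = w.map (rk s) := by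
    have h1 : (s.map (rk s)).drop u.length = z ++ v := by
      rw [← huv, append_assoc, drop_left]
    have h2 : ((s.map (rk s)).drop u.length).take z.length = z := by
      rw [h1, take_left]
    rw [← h2, ← map_drop, ← map_take]
  have : stdize w = stdize z := by
    rw [hz, stdize_map (fun a ha b hb =>
      rk_iff_of_mem hs (hwinf.sublist.mem ha) (hwinf.sublist.mem hb))]
  refine ⟨w, hwinf, this, ?_⟩
  rw [hz, length_map]

lemma stdize_perm_of_perm {s t : List ℕ} (h : s ~ t) : stdize s ~ stdize t := by
  have hrk : ∀ x, rk s x = rk t x := fun x => (h.filter (· ≤ x)).length_eq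
  rw [stdize_eq_map, stdize_eq_map]
  calc s.map (rk s) ~ t.map (rk s) := h.map _
    _ = t.map (rk t) := map_congr_left (fun a _ => hrk a)

lemma stdize_sorted : ∀ {s : List ℕ}, s.Chain' (· < ·) → stdize s = List.range' 1 s.length
  | [], _ => rfl
  | a :: t, h => by
    have ht : t.Chain' (· < ·) := h.tail
    have hat : ∀ x ∈ t, a < x := by
      have := isChain_iff_pairwise.1 h
      intro x hx; exact rel_of_pairwise_cons this hx
    have hfilta : (a :: t).filter (· ≤ a) = [a] := by
      rw [filter_cons_of_pos (by simp)]
      congr 1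
      rw [filter_eq_nil_iff]
      intro x hx
      simp only [decide_eq_true_eq, not_le]
      exact hat x hx
    have key : ∀ x ∈ t, rk (a :: t) x = rk t x + 1 := by
      intro x hx
      rw [rk, rk, filter_cons_of_pos (by simp [le_of_lt (hat x hx)]), length_cons]
    rw [stdize_eq_map]
    have : (a :: t).map (rk (a :: t)) = rk (a :: t) a :: t.map (rk (a :: t)) := rfl
    rw [this]
    have h1 : rk (a :: t) a = 1 := by rw [rk, hfilta]; rfl
    have h2 : t.map (rk (a :: t)) = (t.map (rk t)).map (· + 1) := by
      rw [map_map]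
      exact map_congr_left (fun x hx => key x hx)
    rw [h1, h2, ← stdize_eq_map, stdize_sorted ht]
    have h3 : (List.range' 1 t.length).map (· + 1) = List.range' 2 t.length := by
      simpa [Nat.add_comm] using List.map_add_range' (a := 1) 1 t.length 1
    rw [h3]
    show (1 : ℕ) :: List.range' 2 t.length = List.range' 1 (a :: t).length
    rw [length_cons, List.range'_succ]

lemma isPermList_stdize {s : List ℕ} (hs : s.Nodup) (hne : s ≠ []) : IsPermList (stdize s) := by
  constructor
  · intro h
    have := congrArg List.length h
    simp at this
    exact hne this
  · have hsort := List.pairwise_mergeSort (le := fun a b : ℕ => decide (a ≤ b))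
      (fun a b c => by simp only [decide_eq_true_eq]; omega)
      (fun a b => by simp only [Bool.or_eq_true, decide_eq_true_eq]; omega) s
    have hperm : s.mergeSort (fun a b => decide (a ≤ b)) ~ s := List.mergeSort_perm s _
    have hnodup : (s.mergeSort (fun a b => decide (a ≤ b))).Nodup := hperm.nodup_iff.2 hs
    have hchain : (s.mergeSort (fun a b => decide (a ≤ b))).Chain' (· < ·) := by
      refine isChain_iff_pairwise.2 ?_
      refine (hsort.and hnodup).imp ?_
      rintro a b ⟨hab, hne⟩
      simp only [decide_eq_true_eq] at hab
      exact lt_of_le_of_ne hab hne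
    have := stdize_sorted hchain
    have hlen : (s.mergeSort (fun a b => decide (a ≤ b))).length = s.length := hperm.length_eq
    calc stdize s ~ stdize (s.mergeSort (fun a b => decide (a ≤ b))) :=
          stdize_perm_of_perm hperm.symm
      _ = List.range' 1 (stdize s).length := by rw [this, hlen, length_stdize]

lemma IsPermList.nodup {ρ : List ℕ} (h : IsPermList ρ) : ρ.Nodup :=
  h.2.nodup_iff.2 (List.nodup_range')

lemma rk_range' {n x : ℕ} (h1 : 1 ≤ x) (h2 : x ≤ n) : rk (List.range' 1 n) x = x := by
  have hsplit : List.range' 1 n = List.range' 1 x ++ List.range' (1 + x) (n - x) := by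
    have := List.range'_append (s := 1) (m := x) (n := n - x) (step := 1)
    rw [Nat.one_mul] at this
    rw [this]
    congr 1
    omega
  rw [rk, hsplit, filter_append]
  have hl : (List.range' 1 x).filter (· ≤ x) = List.range' 1 x := by
    rw [filter_eq_self]
    intro a ha
    rw [List.mem_range'_1] at ha
    simp only [decide_eq_true_eq]
    omega
  have hr : (List.range' (1 + x) (n - x)).filter (· ≤ x) = [] := by
    rw [filter_eq_nil_iff]
    intro a ha
    rw [List.mem_range'_1] at ha
    simp only [decide_eq_true_eq]
    omega
  rw [hl, hr, append_nil, List.length_range']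

lemma stdize_of_isPermList {ρ : List ℕ} (h : IsPermList ρ) : stdize ρ = ρ := by
  rw [stdize_eq_map]
  have : ∀ x ∈ ρ, rk ρ x = x := by
    intro x hx
    have hmem : x ∈ List.range' 1 ρ.length := h.2.mem_iff.1 hx
    rw [List.mem_range'_1] at hmem
    have : rk ρ x = rk (List.range' 1 ρ.length) x :=
      (h.2.filter (· ≤ x)).length_eq
    rw [this, rk_range' hmem.1 (by omega)]
  calc ρ.map (rk ρ) = ρ.map id := map_congr_left this
    _ = ρ := map_id ρ

lemma pattLE_refl {ρ : List ℕ} (h : IsPermList ρ) : PattLE ρ ρ :=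
  pattLE_iff.2 ⟨ρ, infix_refl ρ, stdize_of_isPermList h⟩

lemma pattLE_length_le {a b : List ℕ} (h : PattLE a b) : a.length ≤ b.length := by
  obtain ⟨w, hw, rfl⟩ := pattLE_iff.1 h
  rw [length_stdize]
  exact hw.sublist.length_le

lemma pattLE_eq_of_length {a b : List ℕ} (h : PattLE a b) (hb : IsPermList b)
    (hlen : a.length = b.length) : a = b := by
  obtain ⟨w, hw, rfl⟩ := pattLE_iff.1 h
  rw [length_stdize] at hlen
  rw [hw.sublist.eq_of_length hlen, stdize_of_isPermList hb]

lemma pattLE_length_lt {a b : List ℕ} (h : PattLE a b) (hne : a ≠ b)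
    (hb : IsPermList b) : a.length < b.length := by
  rcases lt_or_eq_of_le (pattLE_length_le h) with h' | h'
  · exact h'
  · exact absurd (pattLE_eq_of_length h hb h') hne

lemma pattLE_trans {a b c : List ℕ} (hab : PattLE a b) (hbc : PattLE b c)
    (hc : c.Nodup) : PattLE a c := by
  obtain ⟨v, hv, rfl⟩ := pattLE_iff.1 hbc
  obtain ⟨z, hz, rfl⟩ := pattLE_iff.1 hab
  have hvn : v.Nodup := hv.sublist.nodup hc
  obtain ⟨w, hw, hwz, _⟩ := exists_infix_of_infix_stdize hvn hz
  exact pattLE_iff.2 ⟨w, hw.trans hv, hwz⟩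

lemma isPermList_of_pattLE {a b : List ℕ} (h : PattLE a b) (hb : b.Nodup)
    (hne : a ≠ []) : IsPermList a := by
  obtain ⟨w, hw, rfl⟩ := pattLE_iff.1 h
  refine isPermList_stdize (hw.sublist.nodup hb) ?_
  intro hwnil
  rw [hwnil] at hne
  exact hne rfl

lemma coveredBy'_of_succ {a b : List ℕ} (h : PattLE a b) (hb : IsPermList b)
    (hlen : a.length + 1 = b.length) : CoveredBy a b := by
  refine ⟨h, ?_, ?_⟩
  · intro hab; rw [hab] at hlen; omega
  · rintro ⟨ρ, hρ, haρ, hρb, hρa, hρb'⟩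
    have h1 : a.length < ρ.length := pattLE_length_lt haρ (Ne.symm hρa) hρ
    have h2 : ρ.length < b.length := pattLE_length_lt hρb hρb' hb
    omega

lemma exists_between_of_length {a b : List ℕ} (h : PattLE a b) (hb : IsPermList b)
    (hlen : a.length + 2 ≤ b.length) :
    ∃ ρ, IsPermList ρ ∧ PattLE a ρ ∧ PattLE ρ b ∧ ρ ≠ a ∧ ρ ≠ b := by
  obtain ⟨w, hw, rfl⟩ := pattLE_iff.1 h
  rw [length_stdize] at hlen
  obtain ⟨u, v, huv⟩ := hw
  have hbn : b.Nodup := hb.nodup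
  rcases v with _ | ⟨vh, vt⟩
  · -- v = [], so u ≠ []
    have hu : u ≠ [] := by
      intro hu0
      rw [hu0] at huv
      simp at huv
      rw [← huv] at hlen
      simp at hlen
    obtain ⟨u', l, rfl⟩ := (by exact ⟨u.dropLast, u.getLast hu, (dropLast_concat_getLast hu).symm⟩ :
      ∃ u' l, u = u' ++ [l])
    have hw' : (l :: w) <:+: b := ⟨u', [], by simpa [append_assoc] using huv⟩
    have hw'n : (l :: w).Nodup := hw'.sublist.nodup hbn
    refine ⟨stdize (l :: w), isPermList_stdize hw'n (by simp), ?_, ?_, ?_, ?_⟩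
    · exact pattLE_stdize_of_infix hw'n ⟨[l], [], by simp⟩
    · exact pattLE_iff.2 ⟨l :: w, hw', rfl⟩
    · intro hc
      have := congrArg List.length hc
      simp at this
    · intro hc
      have := congrArg List.length hc
      simp only [length_stdize, length_cons] at this
      omega
  · -- v = vh :: vt
    have hw' : (w ++ [vh]) <:+: b := ⟨u, vt, by
      rw [← huv]; simp [append_assoc]⟩
    have hw'n : (w ++ [vh]).Nodup := hw'.sublist.nodup hbn
    refine ⟨stdize (w ++ [vh]), isPermList_stdize hw'n (by simp), ?_, ?_, ?_, ?_⟩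
    · exact pattLE_stdize_of_infix hw'n ⟨[], [vh], by simp⟩
    · exact pattLE_iff.2 ⟨w ++ [vh], hw', rfl⟩
    · intro hc
      have := congrArg List.length hc
      simp at this
    · intro hc
      have := congrArg List.length hc
      simp only [length_stdize, length_append, length_cons, length_nil] at this
      omega

lemma length_succ_of_coveredBy' {a b : List ℕ} (h : CoveredBy a b) (hb : IsPermList b) :
    a.length + 1 = b.length := by
  obtain ⟨hab, hne, hno⟩ := h
  have h1 : a.length < b.length := pattLE_length_lt hab hne hb
  by_contra hc
  exact hno (exists_between_of_length hab hb (by omega))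

lemma stdize_getElem_rk {A : List ℕ} {i : ℕ} (hi : i < A.length) :
    (stdize A)[i]'(by simpa using hi) = rk A (A[i]) := by
  show (A.map (rk A))[i]'(by simpa using hi) = rk A (A[i])
  exact getElem_map _

lemma stdize_getElem_lt {A : List ℕ} {i j : ℕ} (hi : i < A.length) (hj : j < A.length) :
    (stdize A)[i]'(by simpa using hi) < (stdize A)[j]'(by simpa using hj) ↔ A[i] < A[j] := by
  rw [stdize_getElem_rk hi, stdize_getElem_rk hj]
  exact rk_lt_rk_iff (getElem_mem hi) (getElem_mem hj)

lemma stdize_eq_comparisons {A B : List ℕ} (h : stdize A = stdize B) {i j : ℕ}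
    (hi : i < A.length) (hj : j < A.length) (hi' : i < B.length) (hj' : j < B.length) :
    (A[i] < A[j] ↔ B[i] < B[j]) := by
  rw [← stdize_getElem_lt hi hj, ← stdize_getElem_lt hi' hj']
  constructor
  · intro hlt
    rwa [← List.getElem_of_eq h, ← List.getElem_of_eq h]
  · intro hlt
    rwa [List.getElem_of_eq h, List.getElem_of_eq h]

lemma monotone_of_short {l : List ℕ} (hn : l.Nodup) (hl : l.length ≤ 2) : MonotoneList l := by
  match l with
  | [] => left; exact isChain_nil
  | [a] => left; exact isChain_singleton a
  | [a, b] =>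
    have hab : a ≠ b := by simp at hn; exact hn
    rcases lt_or_gt_of_ne hab with h | h
    · left; exact isChain_pair.2 h
    · right; exact isChain_pair.2 h
  | a :: b :: c :: t => simp at hl

lemma chain'_lt_of_getElem {l : List ℕ}
    (h : ∀ i (hi : i + 1 < l.length), l[i] < l[i+1]) : l.Chain' (· < ·) := by
  refine isChain_iff_getElem.2 ?_
  intro i hi
  exact h i (by omega)

lemma chain'_gt_of_getElem {l : List ℕ}
    (h : ∀ i (hi : i + 1 < l.length), l[i] > l[i+1]) : l.Chain' (· > ·) := by
  refine isChain_iff_getElem.2 ?_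
  intro i hi
  exact h i (by omega)

lemma monotone_of_shift {τ : List ℕ} (hn : τ.Nodup)
    (h : stdize (τ.take (τ.length - 1)) = stdize (τ.drop 1)) : MonotoneList τ := by
  by_cases hlen : τ.length ≤ 2
  · exact monotone_of_short hn hlen
  push_neg at hlen
  have step : ∀ i (hi : i + 2 < τ.length),
      (τ[i]'(by omega) < τ[i+1]'(by omega) ↔ τ[i+1]'(by omega) < τ[i+2]'(by omega)) := by
    intro i hi
    have hiA : i < (τ.take (τ.length - 1)).length := by rw [length_take]; omega
    have hjA : i + 1 < (τ.take (τ.length - 1)).length := by rw [length_take]; omega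
    have hiB : i < (τ.drop 1).length := by rw [length_drop]; omega
    have hjB : i + 1 < (τ.drop 1).length := by rw [length_drop]; omega
    have hcomp := stdize_eq_comparisons h hiA hjA hiB hjB
    have e1 : (τ.take (τ.length - 1))[i]'hiA = τ[i]'(by omega) := getElem_take
    have e2 : (τ.take (τ.length - 1))[i+1]'hjA = τ[i+1]'(by omega) := getElem_take
    have e3 : (τ.drop 1)[i]'hiB = τ[1+i]'(by omega) := getElem_drop
    have e4 : (τ.drop 1)[i+1]'hjB = τ[1+(i+1)]'(by omega) := getElem_drop
    rw [e1, e2, e3, e4] at hcomp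
    have c1 : 1 + i = i + 1 := by omega
    have c2 : 1 + (i + 1) = i + 2 := by omega
    simp only [c1, c2] at hcomp
    exact hcomp
  have hne01 : τ[0]'(by omega) ≠ τ[1]'(by omega) :=
    fun hc => (by omega : (0:ℕ) ≠ 1) (hn.getElem_inj_iff.1 hc)
  rcases lt_or_gt_of_ne hne01 with h01 | h01
  · left
    refine chain'_lt_of_getElem ?_
    intro i hi
    induction i with
    | zero => exact h01
    | succ n ih =>
      exact (step n (by omega)).1 (ih (by omega))
  · right
    refine chain'_gt_of_getElem ?_
    intro i hi
    induction i with
    | zero => exact h01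
    | succ n ih =>
      have hgoal : ¬ τ[n+1]'(by omega) < τ[n+2]'(by omega) := by
        intro hc
        have hlt := (step n (by omega)).2 hc
        have := ih (by omega)
        omega
      have hne : τ[n+1]'(by omega) ≠ τ[n+2]'(by omega) :=
        fun hc => (by omega : n+1 ≠ n+2) (hn.getElem_inj_iff.1 hc)
      show τ[n+2]'(by omega) < τ[n+1]'(by omega)
      omega

lemma pattLE_nil_iff {z : List ℕ} : PattLE z [] ↔ z = [] := by
  rw [pattLE_iff]
  constructor
  · rintro ⟨w, hw, rfl⟩
    have : w = [] := by
      have := hw.sublist.length_le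
      simp only [length_nil] at this
      exact eq_nil_of_length_eq_zero (by omega)
    rw [this]; rfl
  · rintro rfl; exact ⟨[], infix_refl [], rfl⟩

lemma pattLE_nil (l : List ℕ) : PattLE [] l :=
  pattLE_iff.2 ⟨[], nil_infix, rfl⟩

lemma chain_perm : ∀ (c : List (List ℕ)) (x h : List ℕ), x ≠ [] →
    c.Chain' (fun a b => CoveredBy b a) → c.head? = some h → c.getLast? = some x →
    IsPermList h → ∀ ρ ∈ c, IsPermList ρ
  | [], _, _, _, _, hh, _, _ => by simp at hh
  | [a], x, h, _, _, hh, _, hperm => by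
    simp only [head?_cons, Option.some.injEq] at hh
    subst hh
    intro ρ hρ
    simp only [mem_singleton] at hρ
    subst hρ; exact hperm
  | a :: b :: r, x, h, hxne, hch, hh, hl, hperm => by
    simp only [head?_cons, Option.some.injEq] at hh
    subst hh
    have hcov : CoveredBy b a := (isChain_cons_cons.1 hch).1
    have hch' : (b :: r).Chain' (fun a b => CoveredBy b a) := (isChain_cons_cons.1 hch).2
    have hl' : (b :: r).getLast? = some x := by
      rw [← hl]; exact getLast?_cons_cons.symm
    have hbne : b ≠ [] := by
      rcases r with _ | ⟨z, r'⟩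
      · simp only [getLast?_cons_cons, getLast?_singleton, Option.some.injEq] at hl
        rw [hl]; exact hxne
      · intro hb0
        subst hb0
        have hcov2 : CoveredBy z [] := (isChain_cons_cons.1 hch').1
        exact hcov2.2.1 (pattLE_nil_iff.1 hcov2.1)
    have hbperm : IsPermList b := isPermList_of_pattLE hcov.1 hperm.nodup hbne
    intro ρ hρ
    rcases mem_cons.1 hρ with rfl | hρ'
    · exact hperm
    · exact chain_perm (b :: r) x b hxne hch' rfl hl' hbperm ρ hρ'

lemma chain_above : ∀ (c : List (List ℕ)) (x : List ℕ), (∀ ρ ∈ c, IsPermList ρ) →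
    c.Chain' (fun a b => CoveredBy b a) → c.getLast? = some x →
    ∀ ρ ∈ c, PattLE x ρ
  | [], _, _, _, _ => by intro ρ hρ; simp at hρ
  | [a], x, hall, _, hl => by
    simp only [getLast?_singleton, Option.some.injEq] at hl
    subst hl
    intro ρ hρ
    simp only [mem_singleton] at hρ
    subst hρ
    exact pattLE_refl (hall ρ (mem_singleton_self ρ))
  | a :: b :: r, x, hall, hch, hl => by
    have hch' : (b :: r).Chain' (fun a b => CoveredBy b a) := (isChain_cons_cons.1 hch).2
    have hl' : (b :: r).getLast? = some x := by
      rw [← hl]; exact getLast?_cons_cons.symm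
    have hall' : ∀ ρ ∈ b :: r, IsPermList ρ := fun ρ hρ => hall ρ (mem_cons_of_mem a hρ)
    have ih := chain_above (b :: r) x hall' hch' hl'
    intro ρ hρ
    rcases mem_cons.1 hρ with rfl | hρ'
    · have hxb : PattLE x b := ih b (mem_cons_self)
      have hba : PattLE b ρ := (isChain_cons_cons.1 hch).1.1
      exact pattLE_trans hxb hba (hall ρ (mem_cons_self)).nodup
    · exact ih ρ hρ'

def preStd (τ : List ℕ) (k : ℕ) : List ℕ := stdize (τ.take k)
def sufStd (τ : List ℕ) (k : ℕ) : List ℕ := stdize (τ.drop (τ.length - k))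

def chP (τ : List ℕ) (e : ℕ) : ℕ → List (List ℕ)
  | 0 => [preStd τ e]
  | n+1 => preStd τ (e+n+1) :: chP τ e n

def chS (τ : List ℕ) (e : ℕ) : ℕ → List (List ℕ)
  | 0 => [sufStd τ e]
  | n+1 => sufStd τ (e+n+1) :: chS τ e n

lemma stdize_of_length_one {l : List ℕ} (h : l.length = 1) : stdize l = [1] := by
  obtain ⟨a, rfl⟩ := length_eq_one_iff.1 h
  simp [stdize]

section Main

variable {τ : List ℕ} (hτ : IsPermList τ) (hm : ¬ MonotoneList τ)
  (hx : ¬ PattLE (pattExterior τ) (pattInterior τ))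

include hτ hm in
lemma three_le_length : 3 ≤ τ.length := by
  by_contra h
  exact hm (monotone_of_short hτ.nodup (by omega))

include hτ hm in
lemma extLen_pos : 1 ≤ extLen τ := by
  have hd3 := three_le_length hτ hm
  refine Nat.le_findGreatest (by omega) ?_
  show stdize (τ.take 1) = stdize (τ.drop (τ.length - 1))
  rw [stdize_of_length_one (by rw [length_take]; omega),
      stdize_of_length_one (by rw [length_drop]; omega)]

include hτ hm in
lemma extLen_spec : stdize (τ.take (extLen τ)) = stdize (τ.drop (τ.length - extLen τ)) := by
  have hd3 := three_le_length hτ hm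
  exact Nat.findGreatest_spec (P := fun k => stdize (τ.take k) = stdize (τ.drop (τ.length - k)))
    (m := 1) (by omega)
    (by show stdize (τ.take 1) = stdize (τ.drop (τ.length - 1))
        rw [stdize_of_length_one (by rw [length_take]; omega),
            stdize_of_length_one (by rw [length_drop]; omega)])

include hτ hm in
lemma extLen_lt : extLen τ ≤ τ.length - 2 := by
  have hd3 := three_le_length hτ hm
  have hle : extLen τ ≤ τ.length - 1 := Nat.findGreatest_le _
  rcases lt_or_eq_of_le hle with h | h
  · omega
  · exfalso
    have := extLen_spec hτ hm
    rw [h] at this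
    have h1 : τ.length - (τ.length - 1) = 1 := by omega
    rw [h1] at this
    exact hm (monotone_of_shift hτ.nodup this)

include hτ hm in
lemma extLen_max {k : ℕ} (hk : k ≤ τ.length - 1)
    (h : stdize (τ.take k) = stdize (τ.drop (τ.length - k))) : k ≤ extLen τ :=
  Nat.le_findGreatest hk h

include hτ hx in
lemma no_middle {u z v : List ℕ} (he : τ = u ++ z ++ v)
    (hz : stdize z = pattExterior τ) : u = [] ∨ v = [] := by
  by_contra hc
  push_neg at hc
  obtain ⟨hu, hv⟩ := hc
  apply hx
  have h1 : τ.tail = u.tail ++ (z ++ v) := by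
    rw [he, append_assoc, tail_append]
    simp [hu]
  have h2 : τ.tail.dropLast = u.tail ++ z ++ v.dropLast := by
    rw [h1, ← append_assoc, dropLast_append]
    simp [hv]
  have hinf : z <:+: τ.tail.dropLast := ⟨u.tail, v.dropLast, h2.symm⟩
  have hnd : τ.tail.dropLast.Nodup :=
    (τ.tail.dropLast_sublist.trans (tail_sublist τ)).nodup hτ.nodup
  have := pattLE_stdize_of_infix hnd hinf
  rwa [hz] at this

include hτ hx in
lemma occ_end {u w v : List ℕ} (he : τ = u ++ w ++ v)
    (hw : PattLE (pattExterior τ) (stdize w)) : u = [] ∨ v = [] := by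
  have hwnd : w.Nodup := (List.IsInfix.sublist ⟨u, v, he.symm⟩).nodup hτ.nodup
  obtain ⟨z, hz, hzs⟩ := pattLE_iff.1 hw
  obtain ⟨w₂, hw₂, hw₂s, _⟩ := exists_infix_of_infix_stdize hwnd hz
  obtain ⟨u₂, v₂, huv₂⟩ := hw₂
  have he2 : τ = (u ++ u₂) ++ w₂ ++ (v₂ ++ v) := by
    rw [he, ← huv₂]; simp [append_assoc]
  have hstd : stdize w₂ = pattExterior τ := by rw [hw₂s, hzs]
  rcases no_middle hτ hx he2 hstd with h | h
  · left; exact append_eq_nil_iff.1 h |>.1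
  · right; exact append_eq_nil_iff.1 h |>.2

include hτ hx in
lemma pre_or_suf {b : List ℕ} (hxb : PattLE (pattExterior τ) b) (hbτ : PattLE b τ) :
    b = preStd τ b.length ∨ b = sufStd τ b.length := by
  obtain ⟨w, hw, rfl⟩ := pattLE_iff.1 hbτ
  obtain ⟨u, v, huv⟩ := hw
  rcases occ_end hτ hx huv.symm hxb with rfl | rfl
  · left
    have hpre : w <+: τ := ⟨v, by simpa using huv⟩
    have hwτ : w = take w.length τ := prefix_iff_eq_take.1 hpre
    show stdize w = preStd τ (stdize w).length
    rw [length_stdize, preStd, ← hwτ]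
  · right
    have hsuf : w <:+ τ := ⟨u, by simpa using huv⟩
    have hwτ : w = drop (τ.length - w.length) τ := suffix_iff_eq_drop.1 hsuf
    show stdize w = sufStd τ (stdize w).length
    rw [length_stdize, sufStd, ← hwτ]

include hτ hx in
lemma force_pre {k : ℕ} (hk : k < τ.length) {ρ : List ℕ}
    (hxρ : PattLE (pattExterior τ) ρ) (hρ : PattLE ρ (preStd τ k)) :
    ρ = preStd τ ρ.length := by
  have hknd : (τ.take k).Nodup := (take_sublist k τ).nodup hτ.nodup
  obtain ⟨z, hz, hzs⟩ := pattLE_iff.1 hρ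
  obtain ⟨w, hw, hws, hwl⟩ := exists_infix_of_infix_stdize hknd hz
  obtain ⟨u, v, huv⟩ := hw
  have he : τ = u ++ w ++ (v ++ τ.drop k) := by
    conv_lhs => rw [← take_append_drop k τ]
    rw [← huv]; simp [append_assoc]
  have hxw : PattLE (pattExterior τ) (stdize w) := by
    rw [hws, hzs]; exact hxρ
  rcases occ_end hτ hx he hxw with rfl | habs
  · have hpre : w <+: τ := ⟨v ++ τ.drop k, by simpa [append_assoc] using he.symm⟩
    have hρw : ρ = stdize w := by rw [hws, hzs]
    have hwτ : w = take w.length τ := prefix_iff_eq_take.1 hpre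
    rw [hρw]
    show stdize w = preStd τ (stdize w).length
    rw [length_stdize, preStd, ← hwτ]
  · exfalso
    have hnil : τ.drop k = [] := (append_eq_nil_iff.1 habs).2
    rw [drop_eq_nil_iff] at hnil
    omega

include hτ hx in
lemma force_suf {k : ℕ} (hk : k < τ.length) {ρ : List ℕ}
    (hxρ : PattLE (pattExterior τ) ρ) (hρ : PattLE ρ (sufStd τ k)) :
    ρ = sufStd τ ρ.length := by
  have hknd : (τ.drop (τ.length - k)).Nodup := (drop_sublist _ τ).nodup hτ.nodup
  obtain ⟨z, hz, hzs⟩ := pattLE_iff.1 hρ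
  obtain ⟨w, hw, hws, hwl⟩ := exists_infix_of_infix_stdize hknd hz
  obtain ⟨u, v, huv⟩ := hw
  have he : τ = (τ.take (τ.length - k) ++ u) ++ w ++ v := by
    conv_lhs => rw [← take_append_drop (τ.length - k) τ]
    rw [← huv]; simp [append_assoc]
  have hxw : PattLE (pattExterior τ) (stdize w) := by
    rw [hws, hzs]; exact hxρ
  rcases occ_end hτ hx he hxw with habs | rfl
  · exfalso
    have hnil : τ.take (τ.length - k) = [] := (append_eq_nil_iff.1 habs).1
    rw [take_eq_nil_iff] at hnil
    rcases hnil with h | h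
    · omega
    · rw [h] at hk; simp at hk
  · have hsuf : w <:+ τ := ⟨τ.take (τ.length - k) ++ u, by simpa [append_assoc] using he.symm⟩
    have hρw : ρ = stdize w := by rw [hws, hzs]
    have hwτ : w = drop (τ.length - w.length) τ := suffix_iff_eq_drop.1 hsuf
    rw [hρw]
    show stdize w = sufStd τ (stdize w).length
    rw [length_stdize, sufStd, ← hwτ]

end Main

section Main2

variable {τ : List ℕ} (hτ : IsPermList τ) (hm : ¬ MonotoneList τ)
  (hx : ¬ PattLE (pattExterior τ) (pattInterior τ))

include hτ in
lemma preStd_length {k : ℕ} (hk : k ≤ τ.length) : (preStd τ k).length = k := by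
  rw [preStd, length_stdize, length_take]; omega

include hτ in
lemma sufStd_length {k : ℕ} (hk : k ≤ τ.length) : (sufStd τ k).length = k := by
  rw [sufStd, length_stdize, length_drop]; omega

include hτ in
lemma preStd_isPermList {k : ℕ} (h1 : 1 ≤ k) : IsPermList (preStd τ k) := by
  refine isPermList_stdize ((take_sublist k τ).nodup hτ.nodup) ?_
  rw [← length_pos_iff]
  rw [length_take]
  have : τ.length ≥ 1 := length_pos_iff.2 hτ.1
  omega

include hτ in
lemma sufStd_isPermList {k : ℕ} (h1 : 1 ≤ k) : IsPermList (sufStd τ k) := by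
  refine isPermList_stdize ((drop_sublist _ τ).nodup hτ.nodup) ?_
  rw [← length_pos_iff, length_drop]
  have : τ.length ≥ 1 := length_pos_iff.2 hτ.1
  omega

include hτ in
lemma preStd_top : preStd τ τ.length = τ := by
  rw [preStd, take_length, stdize_of_isPermList hτ]

include hτ in
lemma sufStd_top : sufStd τ τ.length = τ := by
  rw [sufStd, Nat.sub_self, drop_zero, stdize_of_isPermList hτ]

lemma preStd_pattLE_self {k : ℕ} : PattLE (preStd τ k) τ :=
  pattLE_iff.2 ⟨τ.take k, (take_prefix k τ).isInfix, rfl⟩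

lemma sufStd_pattLE_self {k : ℕ} : PattLE (sufStd τ k) τ :=
  pattLE_iff.2 ⟨τ.drop (τ.length - k), (drop_suffix _ τ).isInfix, rfl⟩

include hτ in
lemma preStd_step {k : ℕ} : PattLE (preStd τ k) (preStd τ (k+1)) := by
  refine pattLE_stdize_of_infix ((take_sublist _ τ).nodup hτ.nodup) ?_
  exact (take_prefix_take_left (l := τ) (by omega : k ≤ k + 1)).isInfix

include hτ in
lemma sufStd_step {k : ℕ} (hk : k + 1 ≤ τ.length) :
    PattLE (sufStd τ k) (sufStd τ (k+1)) := by
  refine pattLE_stdize_of_infix ((drop_sublist _ τ).nodup hτ.nodup) ?_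
  have h1 : τ.length - k = (τ.length - (k+1)) + 1 := by omega
  rw [h1, ← drop_drop]
  exact (drop_suffix 1 _).isInfix

include hτ hm in
lemma pre_ne_suf {k : ℕ} (h1 : extLen τ < k) (h2 : k ≤ τ.length - 1) :
    preStd τ k ≠ sufStd τ k := by
  intro hc
  have := extLen_max hτ hm h2 hc
  omega

end Main2

section Main3

variable {τ : List ℕ} (hτ : IsPermList τ) (hm : ¬ MonotoneList τ)
  (hx : ¬ PattLE (pattExterior τ) (pattInterior τ))

include hτ in
lemma chP_head {e n : ℕ} : (chP τ e n).head? = some (preStd τ (e+n)) := by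
  cases n with
  | zero => rfl
  | succ m => rfl

include hτ in
lemma chS_head {e n : ℕ} : (chS τ e n).head? = some (sufStd τ (e+n)) := by
  cases n with
  | zero => rfl
  | succ m => rfl

include hτ in
lemma chP_getLast {e n : ℕ} : (chP τ e n).getLast? = some (preStd τ e) := by
  induction n with
  | zero => rfl
  | succ m ih =>
    rw [chP]
    cases hm : chP τ e m with
    | nil => rw [hm] at ih; simp at ih
    | cons a l =>
      rw [hm] at ih
      rw [getLast?_cons_cons, ih]

include hτ in
lemma chS_getLast {e n : ℕ} : (chS τ e n).getLast? = some (sufStd τ e) := by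
  induction n with
  | zero => rfl
  | succ m ih =>
    rw [chS]
    cases hm : chS τ e m with
    | nil => rw [hm] at ih; simp at ih
    | cons a l =>
      rw [hm] at ih
      rw [getLast?_cons_cons, ih]

include hτ in
lemma chP_mem {e n : ℕ} {ρ : List ℕ} (h : ρ ∈ chP τ e n) : ∃ j ≤ n, ρ = preStd τ (e+j) := by
  induction n with
  | zero =>
    rw [chP, mem_singleton] at h
    exact ⟨0, le_refl 0, h⟩
  | succ m ih =>
    rw [chP, mem_cons] at h
    rcases h with rfl | h'
    · exact ⟨m+1, le_refl _, by rw [← Nat.add_assoc]⟩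
    · obtain ⟨j, hj, hρ⟩ := ih h'
      exact ⟨j, by omega, hρ⟩

include hτ in
lemma chS_mem {e n : ℕ} {ρ : List ℕ} (h : ρ ∈ chS τ e n) : ∃ j ≤ n, ρ = sufStd τ (e+j) := by
  induction n with
  | zero =>
    rw [chS, mem_singleton] at h
    exact ⟨0, le_refl 0, h⟩
  | succ m ih =>
    rw [chS, mem_cons] at h
    rcases h with rfl | h'
    · exact ⟨m+1, le_refl _, by rw [← Nat.add_assoc]⟩
    · obtain ⟨j, hj, hρ⟩ := ih h'
      exact ⟨j, by omega, hρ⟩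

include hτ in
lemma chP_chain' {e n : ℕ} (he : 1 ≤ e) (hn : e + n ≤ τ.length) :
    (chP τ e n).Chain' (fun a b => CoveredBy b a) := by
  induction n with
  | zero => exact isChain_singleton _
  | succ m ih =>
    rw [chP]
    rcases hc : chP τ e m with _ | ⟨a, l⟩
    · exact isChain_singleton _
    · show List.IsChain _ _
      rw [isChain_cons_cons]
      constructor
      · have ha : a = preStd τ (e+m) := by
          have := chP_head hτ (e := e) (n := m)
          rw [hc, head?_cons, Option.some.injEq] at this
          rw [this]
        rw [ha]
        refine coveredBy'_of_succ (preStd_step hτ) (preStd_isPermList hτ (by omega)) ?_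
        rw [preStd_length hτ (by omega), preStd_length hτ (by omega)]
      · rw [← hc]
        exact ih (by omega)

include hτ in
lemma chS_chain' {e n : ℕ} (he : 1 ≤ e) (hn : e + n ≤ τ.length) :
    (chS τ e n).Chain' (fun a b => CoveredBy b a) := by
  induction n with
  | zero => exact isChain_singleton _
  | succ m ih =>
    rw [chS]
    rcases hc : chS τ e m with _ | ⟨a, l⟩
    · exact isChain_singleton _
    · show List.IsChain _ _
      rw [isChain_cons_cons]
      constructor
      · have ha : a = sufStd τ (e+m) := by
          have := chS_head hτ (e := e) (n := m)
          rw [hc, head?_cons, Option.some.injEq] at this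
          rw [this]
        rw [ha]
        refine coveredBy'_of_succ (sufStd_step hτ (by omega)) (sufStd_isPermList hτ (by omega)) ?_
        rw [sufStd_length hτ (by omega), sufStd_length hτ (by omega)]
      · rw [← hc]
        exact ih (by omega)

end Main3

section Main4

variable {τ : List ℕ} (hτ : IsPermList τ) (hmono : ¬ MonotoneList τ)
  (hx : ¬ PattLE (pattExterior τ) (pattInterior τ))

include hτ hmono hx in
lemma force_chain_pre : ∀ (n : ℕ) (c : List (List ℕ)),
    extLen τ + n ≤ τ.length - 1 →
    IsMaxChainPatt (pattExterior τ) (preStd τ (extLen τ + n)) c → c = chP τ (extLen τ) n := by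
  have hd3 := three_le_length hτ hmono
  have he1 := extLen_pos hτ hmono
  have hxne : pattExterior τ ≠ [] := by
    have : (pattExterior τ).length = extLen τ := by
      rw [pattExterior, length_stdize, length_take]
      have := extLen_lt hτ hmono
      omega
    intro hc; rw [hc] at this; simp at this; omega
  have hxlen : (pattExterior τ).length = extLen τ := by
    rw [pattExterior, length_stdize, length_take]
    have := extLen_lt hτ hmono
    omega
  intro n
  induction n with
  | zero =>
    intro c _ hc
    obtain ⟨hh, hl, hch⟩ := hc
    have hpx : preStd τ (extLen τ + 0) = pattExterior τ := rfl
    rcases c with _ | ⟨a, c'⟩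
    · simp at hh
    rw [head?_cons, Option.some.injEq] at hh
    subst hh
    rcases c' with _ | ⟨b, r⟩
    · rfl
    · exfalso
      have hperm : ∀ ρ ∈ (preStd τ (extLen τ + 0)) :: b :: r, IsPermList ρ :=
        chain_perm _ _ _ hxne hch rfl hl (preStd_isPermList hτ (by omega))
      have habove := chain_above _ _ hperm hch hl
      have hcov : CoveredBy b (preStd τ (extLen τ + 0)) := (isChain_cons_cons.1 hch).1
      have h1 : b.length < (preStd τ (extLen τ + 0)).length :=
        pattLE_length_lt hcov.1 hcov.2.1 (hperm _ mem_cons_self)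
      have h2 : (pattExterior τ).length ≤ b.length :=
        pattLE_length_le (habove b (mem_cons_of_mem _ mem_cons_self))
      rw [hpx] at h1
      omega
  | succ m ih =>
    intro c hle hc
    obtain ⟨hh, hl, hch⟩ := hc
    have hkd : extLen τ + (m+1) ≤ τ.length := by omega
    rcases c with _ | ⟨a, c'⟩
    · simp at hh
    rw [head?_cons, Option.some.injEq] at hh
    subst hh
    have hkperm : IsPermList (preStd τ (extLen τ + (m+1))) := preStd_isPermList hτ (by omega)
    rcases c' with _ | ⟨b, r⟩
    · exfalso
      simp only [getLast?_singleton, Option.some.injEq] at hl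
      have := congrArg List.length hl
      rw [preStd_length hτ hkd, hxlen] at this
      omega
    · have hperm : ∀ ρ ∈ (preStd τ (extLen τ + (m+1))) :: b :: r, IsPermList ρ :=
        chain_perm _ _ _ hxne hch rfl hl hkperm
      have habove := chain_above _ _ hperm hch hl
      have hcov : CoveredBy b (preStd τ (extLen τ + (m+1))) := (isChain_cons_cons.1 hch).1
      have hbperm : IsPermList b := hperm _ (mem_cons_of_mem _ mem_cons_self)
      have hxb : PattLE (pattExterior τ) b :=
        habove b (mem_cons_of_mem _ mem_cons_self)
      have hblen : b.length + 1 = extLen τ + (m+1) := by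
        have := length_succ_of_coveredBy' hcov hkperm
        rwa [preStd_length hτ hkd] at this
      have hbeq : b = preStd τ b.length := force_pre hτ hx (by omega) hxb hcov.1
      have hbl : b.length = extLen τ + m := by omega
      rw [hbl] at hbeq
      have hmax' : IsMaxChainPatt (pattExterior τ) (preStd τ (extLen τ + m)) (b :: r) := by
        refine ⟨?_, ?_, (isChain_cons_cons.1 hch).2⟩
        · rw [head?_cons, hbeq]
        · rw [← hl, getLast?_cons_cons]
      have := ih (b :: r) (by omega) hmax'
      rw [chP, ← this, Nat.add_assoc (extLen τ) m 1]

include hτ hmono hx in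
lemma force_chain_suf : ∀ (n : ℕ) (c : List (List ℕ)),
    extLen τ + n ≤ τ.length - 1 →
    IsMaxChainPatt (pattExterior τ) (sufStd τ (extLen τ + n)) c → c = chS τ (extLen τ) n := by
  have hd3 := three_le_length hτ hmono
  have he1 := extLen_pos hτ hmono
  have hxS : pattExterior τ = sufStd τ (extLen τ) := by
    rw [pattExterior, sufStd]
    exact extLen_spec hτ hmono
  have hxne : pattExterior τ ≠ [] := by
    have h2 : (pattExterior τ).length = extLen τ := by
      rw [pattExterior, length_stdize, length_take]
      have := extLen_lt hτ hmono
      omega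
    intro hc; rw [hc] at h2; simp at h2; omega
  have hxlen : (pattExterior τ).length = extLen τ := by
    rw [pattExterior, length_stdize, length_take]
    have := extLen_lt hτ hmono
    omega
  intro n
  induction n with
  | zero =>
    intro c _ hc
    obtain ⟨hh, hl, hch⟩ := hc
    have hpx : sufStd τ (extLen τ + 0) = pattExterior τ := hxS.symm
    rcases c with _ | ⟨a, c'⟩
    · simp at hh
    rw [head?_cons, Option.some.injEq] at hh
    subst hh
    rcases c' with _ | ⟨b, r⟩
    · rfl
    · exfalso
      have hperm : ∀ ρ ∈ (sufStd τ (extLen τ + 0)) :: b :: r, IsPermList ρ :=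
        chain_perm _ _ _ hxne hch rfl hl (sufStd_isPermList hτ (by omega))
      have habove := chain_above _ _ hperm hch hl
      have hcov : CoveredBy b (sufStd τ (extLen τ + 0)) := (isChain_cons_cons.1 hch).1
      have h1 : b.length < (sufStd τ (extLen τ + 0)).length :=
        pattLE_length_lt hcov.1 hcov.2.1 (hperm _ mem_cons_self)
      have h2 : (pattExterior τ).length ≤ b.length :=
        pattLE_length_le (habove b (mem_cons_of_mem _ mem_cons_self))
      rw [hpx] at h1
      omega
  | succ m ih =>
    intro c hle hc
    obtain ⟨hh, hl, hch⟩ := hc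
    have hkd : extLen τ + (m+1) ≤ τ.length := by omega
    rcases c with _ | ⟨a, c'⟩
    · simp at hh
    rw [head?_cons, Option.some.injEq] at hh
    subst hh
    have hkperm : IsPermList (sufStd τ (extLen τ + (m+1))) := sufStd_isPermList hτ (by omega)
    rcases c' with _ | ⟨b, r⟩
    · exfalso
      simp only [getLast?_singleton, Option.some.injEq] at hl
      have := congrArg List.length hl
      rw [sufStd_length hτ hkd, hxlen] at this
      omega
    · have hperm : ∀ ρ ∈ (sufStd τ (extLen τ + (m+1))) :: b :: r, IsPermList ρ :=
        chain_perm _ _ _ hxne hch rfl hl hkperm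
      have habove := chain_above _ _ hperm hch hl
      have hcov : CoveredBy b (sufStd τ (extLen τ + (m+1))) := (isChain_cons_cons.1 hch).1
      have hbperm : IsPermList b := hperm _ (mem_cons_of_mem _ mem_cons_self)
      have hxb : PattLE (pattExterior τ) b :=
        habove b (mem_cons_of_mem _ mem_cons_self)
      have hblen : b.length + 1 = extLen τ + (m+1) := by
        have := length_succ_of_coveredBy' hcov hkperm
        rwa [sufStd_length hτ hkd] at this
      have hbeq : b = sufStd τ b.length := force_suf hτ hx (by omega) hxb hcov.1
      have hbl : b.length = extLen τ + m := by omega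
      rw [hbl] at hbeq
      have hmax' : IsMaxChainPatt (pattExterior τ) (sufStd τ (extLen τ + m)) (b :: r) := by
        refine ⟨?_, ?_, (isChain_cons_cons.1 hch).2⟩
        · rw [head?_cons, hbeq]
        · rw [← hl, getLast?_cons_cons]
      have := ih (b :: r) (by omega) hmax'
      rw [chS, ← this, Nat.add_assoc (extLen τ) m 1]

end Main4

theorem two_maximal_chains_exterior'
    (τ : List ℕ) (hτ : IsPermList τ) (hm : ¬ MonotoneList τ)
    (hx : ¬ PattLE (pattExterior τ) (pattInterior τ)) :
    ∃ c₁ c₂ : List (List ℕ), c₁ ≠ c₂ ∧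
      IsMaxChainPatt (pattExterior τ) τ c₁ ∧
      IsMaxChainPatt (pattExterior τ) τ c₂ ∧
      (∀ c : List (List ℕ), IsMaxChainPatt (pattExterior τ) τ c → c = c₁ ∨ c = c₂) ∧
      (∀ ρ : List ℕ, ρ ∈ c₁ → ρ ∈ c₂ → ρ = pattExterior τ ∨ ρ = τ) := by
  have hd3 := three_le_length hτ hm
  have he1 := extLen_pos hτ hm
  have hed := extLen_lt hτ hm
  have hxlen : (pattExterior τ).length = extLen τ := by
    rw [pattExterior, length_stdize, length_take]; omega
  have hxne : pattExterior τ ≠ [] := by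
    intro hc; rw [hc] at hxlen; simp at hxlen; omega
  set e := extLen τ with he
  set d := τ.length with hd
  set m := d - 2 - e with hmdef
  have hm1 : e + (m + 1) = d - 1 := by omega
  refine ⟨τ :: chP τ e (m+1), τ :: chS τ e (m+1), ?_, ?_, ?_, ?_, ?_⟩
  · -- the two chains are distinct
    intro hc
    rw [chP, chS, List.cons.injEq, List.cons.injEq] at hc
    have h2 := hc.2.1
    exact pre_ne_suf hτ hm (by omega) (by omega) h2
  · -- c₁ is a maximal chain
    refine ⟨rfl, ?_, ?_⟩
    · rw [chP, getLast?_cons_cons, ← chP]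
      rw [chP_getLast hτ]
      rfl
    · rw [chP]
      refine isChain_cons_cons.2 ⟨?_, ?_⟩
      · refine coveredBy'_of_succ preStd_pattLE_self hτ ?_
        rw [preStd_length hτ (by omega)]
        omega
      · rw [← chP]
        exact chP_chain' hτ (by omega) (by omega)
  · -- c₂ is a maximal chain
    refine ⟨rfl, ?_, ?_⟩
    · rw [chS, getLast?_cons_cons, ← chS]
      rw [chS_getLast hτ]
      congr 1
      rw [pattExterior, sufStd]
      exact (extLen_spec hτ hm).symm
    · rw [chS]
      refine isChain_cons_cons.2 ⟨?_, ?_⟩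
      · refine coveredBy'_of_succ sufStd_pattLE_self hτ ?_
        rw [sufStd_length hτ (by omega)]
        omega
      · rw [← chS]
        exact chS_chain' hτ (by omega) (by omega)
  · -- uniqueness
    intro c hc
    obtain ⟨hh, hl, hch⟩ := hc
    rcases c with _ | ⟨a, c'⟩
    · simp at hh
    rw [head?_cons, Option.some.injEq] at hh
    have hh' : τ = a := hh.symm
    subst hh'
    rcases c' with _ | ⟨b, r⟩
    · exfalso
      simp only [getLast?_singleton, Option.some.injEq] at hl
      have := congrArg List.length hl
      rw [hxlen] at this
      omega
    have hperm : ∀ ρ ∈ τ :: b :: r, IsPermList ρ :=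
      chain_perm _ _ _ hxne hch rfl hl hτ
    have habove := chain_above _ _ hperm hch hl
    have hcov : CoveredBy b τ := (isChain_cons_cons.1 hch).1
    have hxb : PattLE (pattExterior τ) b :=
      habove b (mem_cons_of_mem _ mem_cons_self)
    have hblen : b.length + 1 = d := length_succ_of_coveredBy' hcov hτ
    have hbl : b.length = e + (m + 1) := by omega
    rcases pre_or_suf hτ hx hxb hcov.1 with hb | hb
    · left
      have hmax' : IsMaxChainPatt (pattExterior τ) (preStd τ (e + (m+1))) (b :: r) := by
        refine ⟨?_, ?_, (isChain_cons_cons.1 hch).2⟩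
        · rw [head?_cons, Option.some.injEq, hb, hbl]
        · rw [← hl, getLast?_cons_cons]
      have := force_chain_pre hτ hm hx (m+1) (b :: r) (by omega) hmax'
      rw [this]
    · right
      have hmax' : IsMaxChainPatt (pattExterior τ) (sufStd τ (e + (m+1))) (b :: r) := by
        refine ⟨?_, ?_, (isChain_cons_cons.1 hch).2⟩
        · rw [head?_cons, Option.some.injEq, hb, hbl]
        · rw [← hl, getLast?_cons_cons]
      have := force_chain_suf hτ hm hx (m+1) (b :: r) (by omega) hmax'
      rw [this]
  · -- intersection
    intro ρ h1 h2
    rcases mem_cons.1 h1 with rfl | h1'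
    · right; rfl
    rcases mem_cons.1 h2 with heq | h2'
    · right; exact heq
    obtain ⟨j, hj, hρ1⟩ := chP_mem hτ h1'
    obtain ⟨j', hj', hρ2⟩ := chS_mem hτ h2'
    have hlen : e + j = e + j' := by
      have l1 : ρ.length = e + j := by rw [hρ1, preStd_length hτ (by omega)]
      have l2 : ρ.length = e + j' := by rw [hρ2, sufStd_length hτ (by omega)]
      omega
    have hjj : j = j' := by omega
    rcases Nat.eq_zero_or_pos j with rfl | hjpos
    · left
      rw [hρ1]
      rfl
    · exfalso
      subst hjj
      exact pre_ne_suf hτ hm (by omega) (by omega) (hρ1.symm.trans hρ2)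

/-- If `τ` is not monotone and `x(τ) ≰ i(τ)`, then the interval `[x(τ), τ]` has
exactly two maximal chains, and these chains meet only in `x(τ)` and `τ`. -/
theorem two_maximal_chains_exterior
    (τ : List ℕ) (hτ : IsPermList τ) (hm : ¬ MonotoneList τ)
    (hx : ¬ PattLE (pattExterior τ) (pattInterior τ)) :
    ∃ c₁ c₂ : List (List ℕ), c₁ ≠ c₂ ∧
      IsMaxChainPatt (pattExterior τ) τ c₁ ∧
      IsMaxChainPatt (pattExterior τ) τ c₂ ∧
      (∀ c : List (List ℕ), IsMaxChainPatt (pattExterior τ) τ c → c = c₁ ∨ c = c₂) ∧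
      (∀ ρ : List ℕ, ρ ∈ c₁ → ρ ∈ c₂ → ρ = pattExterior τ ∨ ρ = τ) :=
  two_maximal_chains_exterior' τ hτ hm hx
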